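/- Let X ⊆ [1,∞) be a closed and discrete subset of ℝ, and let Q = {1/x : x ∈ X}. For k ≥ 1, let Q_k be the set of all sums q_1 + ⋯ + q_k such that each q_i ∈ ±Q = Q ∪ (−Q), |q_1| = 1, and Σ_{i∈I} q_i ≠ 0 for every nonempty I ⊆ {1,…,k}. Then for every k ≥ 1 there exists ε_k > 0 such that |q| > ε_k for all q ∈ Q_k. -/

import Mathlib

open Filter Pointwise

/-- The `k`-fold sumset `X + ⋯ + X` (`k` times) of a set of integers. -/
def kFold (X : Set ℤ) (k : ℕ) : Set ℤ :=
  {z : ℤ | ∃ f : Fin k → ℤ, (∀ i, f i ∈ X) ∧ z = ∑ i, f i}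

/-- `Σ_n(X) = ⋃_{k=1}^n k(X)`. -/
def sigmaSum (n : ℕ) (X : Set ℤ) : Set ℤ :=
  ⋃ k ∈ Finset.Icc 1 n, kFold X k

/-- `±A = {x ∈ ℤ : |x| ∈ A}`. -/
def pmSet (A : Set ℤ) : Set ℤ := {x : ℤ | |x| ∈ A}

/-- The lower asymptotic density of a set of naturals:
`liminf_{n → ∞} |A ∩ {1,…,n}| / n`. -/
noncomputable def lowerDensity (A : Set ℕ) : ℝ :=
  Filter.liminf (fun n : ℕ => (Set.ncard (A ∩ Set.Icc 1 n) : ℝ) / n) Filter.atTop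

/-- The set of naturals whose image in `ℤ` lies in `S`. -/
def intSetToNat (S : Set ℤ) : Set ℕ := {n : ℕ | (n : ℤ) ∈ S}

/-- `A ⊆ ℤ` is sufficiently sparse if `δ̲(Σ_n(±A) ∩ ℕ) = 0` for all `n ≥ 1`. -/
def SuffSparse (A : Set ℤ) : Prop :=
  ∀ n : ℕ, 1 ≤ n → lowerDensity (intSetToNat (sigmaSum n (pmSet A))) = 0

/-- A set `S` of (positive) reals is geometric if `{s/t : s, t ∈ S, t ≤ s}` is a closed
and discrete subset of `ℝ`. -/
def IsGeometric (S : Set ℝ) : Prop :=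
  IsClosed {x : ℝ | ∃ s ∈ S, ∃ t ∈ S, t ≤ s ∧ x = s / t} ∧
    DiscreteTopology {x : ℝ | ∃ s ∈ S, ∃ t ∈ S, t ≤ s ∧ x = s / t}

/-- `A ⊆ ℤ` is geometrically sparse if there is `f : A → ℝ⁺` with `f(A)` geometric and
`sup_{a ∈ A} |a − f(a)| < ∞`. -/
def GeomSparse (A : Set ℤ) : Prop :=
  ∃ f : ℤ → ℝ, (∀ a ∈ A, 0 < f a) ∧ IsGeometric (f '' A) ∧
    ∃ C : ℝ, ∀ a ∈ A, |(a : ℝ) - f a| ≤ C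

/-- Let `X ⊆ [1,∞)` be closed and discrete, `Q = {1/x : x ∈ X}`. For each
`k ≥ 1` there is `ε_k > 0` such that any sum `q_1 + ⋯ + q_k` with each `q_i ∈ ±Q`,
`|q_1| = 1`, and all nonempty subset sums nonzero, has absolute value `> ε_k`. -/
lemma exists_pos_lb_of_finite {S : Set ℝ} (hS : S.Finite) :
    ∃ m, 0 < m ∧ ∀ s ∈ S, s ≠ 0 → m ≤ |s| := by
  by_cases h : (S \ {0}).Nonempty
  · have hfin : (abs '' (S \ {0})).Finite := (hS.subset Set.diff_subset).image _
    have hne : hfin.toFinset.Nonempty := by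
      simpa [Set.Finite.toFinset_nonempty] using h.image abs
    refine ⟨hfin.toFinset.min' hne, ?_, ?_⟩
    · have := hfin.toFinset.min'_mem hne
      rw [Set.Finite.mem_toFinset] at this
      obtain ⟨s, hs, heq⟩ := this
      rw [← heq]
      exact abs_pos.2 hs.2
    · intro s hs hs0
      apply Finset.min'_le
      rw [Set.Finite.mem_toFinset]
      exact ⟨s, ⟨hs, hs0⟩, rfl⟩
  · refine ⟨1, one_pos, fun s hs hs0 => absurd ⟨s, hs, hs0⟩ h⟩

theorem subset_sums_bounded_away_from_zero (X : Set ℝ) (hX1 : X ⊆ Set.Ici 1)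
    (hXc : IsClosed X) (hXd : DiscreteTopology X) :
    ∀ (k : ℕ) (hk : 0 < k), ∃ ε : ℝ, 0 < ε ∧
      ∀ q : Fin k → ℝ,
        (∀ i, q i ∈ {y : ℝ | ∃ x ∈ X, y = 1 / x} ∪ -{y : ℝ | ∃ x ∈ X, y = 1 / x}) →
        |q ⟨0, hk⟩| = 1 →
        (∀ I : Finset (Fin k), I.Nonempty → ∑ i ∈ I, q i ≠ 0) →
        ε < |∑ i, q i| := by
  intro k hk
  set PQ : Set ℝ :=
    {y : ℝ | ∃ x ∈ X, y = 1 / x} ∪ -{y : ℝ | ∃ x ∈ X, y = 1 / x} with hPQdef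
  -- every element of PQ is ±(1/x) for some x ∈ X
  have hmem : ∀ q ∈ PQ, ∃ x ∈ X, |q| = 1 / x := by
    rintro q (⟨x, hx, rfl⟩ | hq)
    · have hx1 : (1:ℝ) ≤ x := hX1 hx
      exact ⟨x, hx, abs_of_pos (by positivity)⟩
    · rw [Set.mem_neg] at hq
      obtain ⟨x, hx, hqx⟩ := hq
      have hx1 : (1:ℝ) ≤ x := hX1 hx
      refine ⟨x, hx, ?_⟩
      rw [← abs_neg, hqx]
      exact abs_of_pos (by positivity)
  -- X ∩ [1, B] is finite
  have hXfin : ∀ B : ℝ, (X ∩ Set.Icc 1 B).Finite := by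
    intro B
    have hc : IsCompact (X ∩ Set.Icc 1 B) := isCompact_Icc.inter_left hXc
    have hd : DiscreteTopology ↥(X ∩ Set.Icc 1 B) :=
      DiscreteTopology.of_subset hXd Set.inter_subset_left
    exact hc.finite ⟨hd⟩
  -- elements of PQ of absolute value ≥ d form a finite set
  have hFfin : ∀ d : ℝ, 0 < d → {q : ℝ | q ∈ PQ ∧ d ≤ |q|}.Finite := by
    intro d hd
    apply Set.Finite.subset (((hXfin (1/d)).image (fun x => 1/x)).union
      ((hXfin (1/d)).image (fun x => -(1/x))))
    rintro q ⟨hqPQ, hqd⟩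
    obtain ⟨x, hx, habs⟩ := hmem q hqPQ
    have hx1 : (1:ℝ) ≤ x := hX1 hx
    have hx0 : (0:ℝ) < x := zero_lt_one.trans_le hx1
    have hxB : x ≤ 1/d := by
      rw [habs, le_div_iff₀ hx0] at hqd
      rw [le_div_iff₀ hd]
      nlinarith
    rcases abs_cases q with ⟨h1, _⟩ | ⟨h1, _⟩
    · refine Or.inl ⟨x, ⟨hx, hx1, hxB⟩, ?_⟩
      show (1:ℝ)/x = q
      rw [← habs]; exact h1
    · refine Or.inr ⟨x, ⟨hx, hx1, hxB⟩, ?_⟩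
      show -((1:ℝ)/x) = q
      rw [← habs, h1, neg_neg]
  -- key step lemma
  have step : ∀ d : ℝ, 0 < d → ∃ d', 0 < d' ∧ d' ≤ d ∧
      ∀ (q : Fin k → ℝ) (I : Finset (Fin k)), (∀ i ∈ I, q i ∈ PQ ∧ d ≤ |q i|) →
        (∑ i ∈ I, q i) ≠ 0 → 2*k*d' ≤ |∑ i ∈ I, q i| := by
    intro d hd
    set F := {q : ℝ | q ∈ PQ ∧ d ≤ |q|} with hF
    have hFf : F.Finite := hFfin d hd
    set T := (fun f : Fin k → ℝ => ∑ i, f i) '' (Set.univ.pi fun _ : Fin k => insert (0:ℝ) F)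
      with hT
    have hTf : T.Finite := (Set.Finite.pi fun _ => hFf.insert 0).image _
    obtain ⟨m, hm, hmlb⟩ := exists_pos_lb_of_finite hTf
    have hk' : (0:ℝ) < 2*k := by positivity
    refine ⟨min d (m/(2*k)), lt_min hd (by positivity), min_le_left _ _, ?_⟩
    intro q I hqI hne
    have hmemT : (∑ i ∈ I, q i) ∈ T := by
      refine ⟨fun i => if i ∈ I then q i else 0, ?_, ?_⟩
      · intro i _
        by_cases hi : i ∈ I
        · simp only [hi, if_true]
          exact Set.mem_insert_of_mem _ (hqI i hi)
        · simp [hi]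
      · simp [Finset.sum_ite_mem]
    have hmle := hmlb _ hmemT hne
    calc 2*k*(min d (m/(2*k))) ≤ 2*k*(m/(2*k)) :=
            mul_le_mul_of_nonneg_left (min_le_right _ _) hk'.le
      _ = m := by field_simp
      _ ≤ |∑ i ∈ I, q i| := hmle
  choose f hf0 hfle hfbd using step
  -- recursively defined thresholds
  set g : {d : ℝ // 0 < d} → {d : ℝ // 0 < d} := fun p => ⟨f p.1 p.2, hf0 p.1 p.2⟩ with hg
  set δ : ℕ → {d : ℝ // 0 < d} := fun n => g^[n] ⟨1, one_pos⟩ with hδ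
  have hδ0 : δ 0 = ⟨1, one_pos⟩ := rfl
  have hδsucc : ∀ n, δ (n+1) = g (δ n) := fun n => Function.iterate_succ_apply' g n _
  have hδanti : Antitone (fun n => (δ n).1) := by
    apply antitone_nat_of_succ_le
    intro n
    rw [hδsucc n]
    exact hfle (δ n).1 (δ n).2
  have hδbd : ∀ (n : ℕ) (q : Fin k → ℝ) (I : Finset (Fin k)),
      (∀ i ∈ I, q i ∈ PQ ∧ (δ n).1 ≤ |q i|) → (∑ i ∈ I, q i) ≠ 0 →
      2*k*(δ (n+1)).1 ≤ |∑ i ∈ I, q i| := by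
    intro n q I hqI hne
    rw [hδsucc n]
    exact hfbd (δ n).1 (δ n).2 q I hqI hne
  refine ⟨(δ (k+1)).1 / 2, by have := (δ (k+1)).2; positivity, ?_⟩
  intro q hq hq0 hsub
  -- pigeonhole: find a gap
  set B : Finset ℕ := (Finset.range (k+1)).filter
    (fun j => ∃ i, (δ (j+1)).1 ≤ |q i| ∧ |q i| < (δ j).1) with hB
  have hBcard : B.card ≤ k := by
    have hwit : ∀ j ∈ B, ∃ i : Fin k, (δ (j+1)).1 ≤ |q i| ∧ |q i| < (δ j).1 :=
      fun j hj => (Finset.mem_filter.1 hj).2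
    choose w hw1 hw2 using hwit
    classical
    set w' : ℕ → Fin k := fun j => if h : j ∈ B then w j h else ⟨0, hk⟩ with hw'
    have key : ∀ a b (ha : a ∈ B) (hb : b ∈ B), a < b → w a ha ≠ w b hb := by
      intro a b ha hb hlt heq
      have h1 : (δ b).1 ≤ (δ (a+1)).1 := hδanti hlt
      have h2 := hw1 a ha
      have h3 := hw2 b hb
      rw [← heq] at h3
      linarith
    have hinj : Set.InjOn w' B := by
      intro a ha' b hb' hab
      have ha : a ∈ B := Finset.mem_coe.mp ha'
      have hb : b ∈ B := Finset.mem_coe.mp hb'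
      by_contra hne
      have hab' : w a ha = w b hb := by
        rw [hw'] at hab
        simpa [dif_pos ha, dif_pos hb] using hab
      rcases lt_or_gt_of_ne hne with h | h
      · exact key a b ha hb h hab'
      · exact key b a hb ha h hab'.symm
    have := Finset.card_le_card_of_injOn w' (fun j _ => Finset.mem_univ (w' j)) hinj
    simpa using this
  obtain ⟨j, hjr, hjB⟩ : ∃ j ∈ Finset.range (k+1), j ∉ B := by
    by_contra hcon
    push_neg at hcon
    have hsubB : Finset.range (k+1) ⊆ B := fun j hj => hcon j hj
    have := Finset.card_le_card hsubB
    rw [Finset.card_range] at this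
    omega
  have hjk : j ≤ k := by
    rw [Finset.mem_range] at hjr; omega
  -- no value in the gap [δ (j+1), δ j)
  have hgap : ∀ i : Fin k, ¬((δ (j+1)).1 ≤ |q i| ∧ |q i| < (δ j).1) := by
    intro i hi
    exact hjB (Finset.mem_filter.2 ⟨hjr, ⟨i, hi⟩⟩)
  set L : Finset (Fin k) := Finset.univ.filter (fun i => (δ j).1 ≤ |q i|) with hL
  have h0L : (⟨0, hk⟩ : Fin k) ∈ L := by
    rw [hL, Finset.mem_filter]
    refine ⟨Finset.mem_univ _, ?_⟩
    rw [hq0]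
    have : (δ j).1 ≤ (δ 0).1 := hδanti (Nat.zero_le j)
    simpa [hδ0] using this
  have hLne : L.Nonempty := ⟨_, h0L⟩
  have hLsum_ne : ∑ i ∈ L, q i ≠ 0 := hsub L hLne
  have hbig : 2*k*(δ (j+1)).1 ≤ |∑ i ∈ L, q i| := by
    apply hδbd j q L _ hLsum_ne
    intro i hi
    rw [hL, Finset.mem_filter] at hi
    exact ⟨hq i, hi.2⟩
  have hsmall : ∀ i ∈ Lᶜ, |q i| ≤ (δ (j+1)).1 := by
    intro i hi
    rw [Finset.mem_compl, hL, Finset.mem_filter] at hi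
    push_neg at hi
    have hlt : |q i| < (δ j).1 := hi (Finset.mem_univ i)
    by_contra hge
    push_neg at hge
    exact hgap i ⟨hge.le, hlt⟩
  have hsmallsum : |∑ i ∈ Lᶜ, q i| ≤ k * (δ (j+1)).1 := by
    calc |∑ i ∈ Lᶜ, q i| ≤ ∑ i ∈ Lᶜ, |q i| := Finset.abs_sum_le_sum_abs _ _
      _ ≤ ∑ _i ∈ Lᶜ, (δ (j+1)).1 := Finset.sum_le_sum hsmall
      _ = Lᶜ.card * (δ (j+1)).1 := by rw [Finset.sum_const, nsmul_eq_mul]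
      _ ≤ k * (δ (j+1)).1 := by
          apply mul_le_mul_of_nonneg_right _ (δ (j+1)).2.le
          exact_mod_cast le_trans (Finset.card_le_card (Finset.subset_univ _)) (by simp)
  have hsplit : ∑ i, q i = ∑ i ∈ L, q i + ∑ i ∈ Lᶜ, q i :=
    (Finset.sum_add_sum_compl L q).symm
  have hk1 : (1:ℝ) ≤ k := by exact_mod_cast hk
  have hdj : (δ (k+1)).1 ≤ (δ (j+1)).1 := hδanti (by omega)
  have htotal : k * (δ (j+1)).1 ≤ |∑ i, q i| := by
    rw [hsplit]
    have := abs_sub_abs_le_abs_sub (∑ i ∈ L, q i) (-(∑ i ∈ Lᶜ, q i))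
    rw [abs_neg, sub_neg_eq_add] at this
    have h2 : |∑ i ∈ L, q i| - |∑ i ∈ Lᶜ, q i| ≤ |∑ i ∈ L, q i + ∑ i ∈ Lᶜ, q i| := this
    nlinarith [(δ (j+1)).2]
  have : (δ (k+1)).1 / 2 < (δ (j+1)).1 := by
    have := (δ (k+1)).2
    linarith
  calc (δ (k+1)).1 / 2 < (δ (j+1)).1 := this
    _ ≤ k * (δ (j+1)).1 := le_mul_of_one_le_left (δ (j+1)).2.le hk1
    _ ≤ |∑ i, q i| := htotal
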